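/- arXiv:1402.3327 — 3 statements merged into one kernel-verified Lean document; each statement's English description precedes it below -/
import Mathlib

section
/- Let η, ν be real skew-symmetric 3×3 matrices with 2‖η‖₂ + ‖ν‖₂ < 1, where ‖·‖₂ is the matrix operator 2-norm. Then the Cayley transforms Cay(η) = (I − η)(I + η)⁻¹ and Cay(ν) = (I − ν)(I + ν)⁻¹ satisfy ‖Cay(η) − Cay(ν)‖₂ ≤ C ‖η − ν‖₂, where C = (1 − ‖ν‖₂)⁻¹ + (1 − ‖η‖₂)⁻¹(1 − ‖ν‖₂)⁻¹(1 − 2‖η‖₂ − ‖ν‖₂)⁻¹. -/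
open scoped Matrix.Norms.L2Operator

section aux

lemma aux_unit (x : Matrix (Fin 3) (Fin 3) ℝ) (h : ‖x‖ < 1) :
    IsUnit (1 + x) := by
  have := isUnit_one_sub_of_norm_lt_one (x := -x) (by rwa [norm_neg])
  simpa [sub_neg_eq_add] using this

lemma aux_inv_norm (x : Matrix (Fin 3) (Fin 3) ℝ) (h : ‖x‖ < 1) :
    ‖(1 + x)⁻¹‖ ≤ (1 - ‖x‖)⁻¹ := by
  have h' : ‖-x‖ < 1 := by rwa [norm_neg]
  have h2 : (1 : Matrix (Fin 3) (Fin 3) ℝ) + x = 1 - -x := by rw [sub_neg_eq_add]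
  have e : (1 + x)⁻¹ = ∑' n : ℕ, (-x) ^ n := by
    rw [Matrix.nonsing_inv_eq_ringInverse, h2, ← geom_series_eq_inverse (-x) h']
  rw [e]
  calc ‖∑' n : ℕ, (-x) ^ n‖ ≤ ‖(1 : Matrix (Fin 3) (Fin 3) ℝ)‖ - 1 + (1 - ‖-x‖)⁻¹ :=
        tsum_geometric_le_of_norm_lt_one _ h'
    _ = (1 - ‖x‖)⁻¹ := by rw [norm_one, norm_neg]; ring

end aux

/-- Lipschitz-type chart conditioning bound for the Cayley transform on `so(3)`:
for skew-symmetric `η, ν` with `2‖η‖₂ + ‖ν‖₂ < 1`,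
`‖Cay(η) − Cay(ν)‖₂ ≤ C ‖η − ν‖₂` with
`C = (1 − ‖ν‖)⁻¹ + (1 − ‖η‖)⁻¹(1 − ‖ν‖)⁻¹(1 − 2‖η‖ − ‖ν‖)⁻¹`. -/
theorem stmt_3 (η ν : Matrix (Fin 3) (Fin 3) ℝ)
    (hη : η.transpose = -η) (hν : ν.transpose = -ν)
    (hnorm : 2 * ‖η‖ + ‖ν‖ < 1) :
    ‖(1 - η) * (1 + η)⁻¹ - (1 - ν) * (1 + ν)⁻¹‖ ≤
      ((1 - ‖ν‖)⁻¹ + (1 - ‖η‖)⁻¹ * (1 - ‖ν‖)⁻¹ * (1 - 2 * ‖η‖ - ‖ν‖)⁻¹) *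
        ‖η - ν‖ := by
  have ha0 : (0:ℝ) ≤ ‖η‖ := norm_nonneg _
  have hb0 : (0:ℝ) ≤ ‖ν‖ := norm_nonneg _
  have ha : ‖η‖ < 1 := by linarith
  have hb : ‖ν‖ < 1 := by linarith
  have hud : IsUnit (1 + η).det := (Matrix.isUnit_iff_isUnit_det _).mp (aux_unit η ha)
  have hvd : IsUnit (1 + ν).det := (Matrix.isUnit_iff_isUnit_det _).mp (aux_unit ν hb)
  set X := (1 + η)⁻¹ with hXdef
  set Y := (1 + ν)⁻¹ with hYdef
  have hX : (1 + η) * X = 1 := Matrix.mul_nonsing_inv _ hud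
  have hX' : X * (1 + η) = 1 := Matrix.nonsing_inv_mul _ hud
  have hY : (1 + ν) * Y = 1 := Matrix.mul_nonsing_inv _ hvd
  have hY' : Y * (1 + ν) = 1 := Matrix.nonsing_inv_mul _ hvd
  -- X commutes with (1 - η)
  have c1 : (1 - η) * X = X * (1 - η) := by
    have h2 : (1 - η : Matrix (Fin 3) (Fin 3) ℝ) = (1 + 1) - (1 + η) := by abel
    rw [h2, sub_mul, mul_sub, hX, hX', add_mul, one_mul, mul_add, mul_one]
  have t1 : X * ((1 - η) * (1 + ν)) * Y = (1 - η) * X := by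
    simp only [mul_assoc]
    rw [hY, mul_one, c1]
  have t2 : X * ((1 + η) * (1 - ν)) * Y = (1 - ν) * Y := by
    rw [← mul_assoc X (1 + η), hX', one_mul]
  have hin : (1 - η) * (1 + ν) - (1 + η) * (1 - ν) = (2:ℝ) • (ν - η) := by
    rw [two_smul ℝ]; noncomm_ring
  have key : (1 - η) * X - (1 - ν) * Y = X * ((2:ℝ) • (ν - η)) * Y := by
    calc (1 - η) * X - (1 - ν) * Y
        = X * ((1 - η) * (1 + ν)) * Y - X * ((1 + η) * (1 - ν)) * Y := by rw [t1, t2]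
      _ = X * ((1 - η) * (1 + ν) - (1 + η) * (1 - ν)) * Y := by noncomm_ring
      _ = X * ((2:ℝ) • (ν - η)) * Y := by rw [hin]
  have hninv_u : ‖X‖ ≤ (1 - ‖η‖)⁻¹ := aux_inv_norm η ha
  have hninv_v : ‖Y‖ ≤ (1 - ‖ν‖)⁻¹ := aux_inv_norm ν hb
  have hmid : ‖(2:ℝ) • (ν - η)‖ = 2 * ‖η - ν‖ := by
    rw [norm_smul, norm_sub_rev]; simp
  have hp : (0:ℝ) ≤ (1 - ‖η‖)⁻¹ := inv_nonneg.2 (by linarith)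
  have hq : (0:ℝ) ≤ (1 - ‖ν‖)⁻¹ := inv_nonneg.2 (by linarith)
  have bound : ‖(1 - η) * X - (1 - ν) * Y‖
      ≤ (1 - ‖η‖)⁻¹ * (2 * ‖η - ν‖) * (1 - ‖ν‖)⁻¹ := by
    rw [key]
    calc ‖X * ((2:ℝ) • (ν - η)) * Y‖
        ≤ ‖X * ((2:ℝ) • (ν - η))‖ * ‖Y‖ := norm_mul_le _ _
      _ ≤ ‖X‖ * ‖(2:ℝ) • (ν - η)‖ * ‖Y‖ :=
          mul_le_mul_of_nonneg_right (norm_mul_le _ _) (norm_nonneg _)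
      _ ≤ (1 - ‖η‖)⁻¹ * (2 * ‖η - ν‖) * (1 - ‖ν‖)⁻¹ := by
          refine mul_le_mul (mul_le_mul hninv_u hmid.le (norm_nonneg _) hp)
            hninv_v (norm_nonneg _) ?_
          positivity
  refine bound.trans ?_
  set a := ‖η‖; set b := ‖ν‖
  have h1 : (0:ℝ) < 1 - a := by linarith
  have h3 : (0:ℝ) < 1 - 2*a - b := by linarith
  have step : 2 * (1-a)⁻¹ ≤ 1 + (1-a)⁻¹ * (1 - 2*a - b)⁻¹ := by
    have hpos : (0:ℝ) < (1-a) * (1 - 2*a - b) := mul_pos h1 h3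
    rw [← mul_le_mul_iff_right₀ hpos]
    have lhs : ((1-a) * (1 - 2*a - b)) * (2 * (1-a)⁻¹) = 2 * (1 - 2*a - b) := by
      field_simp <;> ring
    have rhs : ((1-a) * (1 - 2*a - b)) * (1 + (1-a)⁻¹ * (1 - 2*a - b)⁻¹)
        = (1-a) * (1 - 2*a - b) + 1 := by
      rw [mul_add, mul_one, mul_mul_mul_comm, mul_inv_cancel₀ h1.ne', mul_inv_cancel₀ h3.ne', one_mul]
    rw [lhs, rhs]
    nlinarith [mul_nonneg ha0 hb0, mul_nonneg ha0 ha0]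
  have hC : (1-a)⁻¹ * 2 * (1-b)⁻¹
      ≤ (1-b)⁻¹ + (1-a)⁻¹ * (1-b)⁻¹ * (1 - 2*a - b)⁻¹ := by
    calc (1-a)⁻¹ * 2 * (1-b)⁻¹ = (2 * (1-a)⁻¹) * (1-b)⁻¹ := by ring
      _ ≤ (1 + (1-a)⁻¹ * (1 - 2*a - b)⁻¹) * (1-b)⁻¹ :=
          mul_le_mul_of_nonneg_right step hq
      _ = (1-b)⁻¹ + (1-a)⁻¹ * (1-b)⁻¹ * (1 - 2*a - b)⁻¹ := by ring
  calc (1-a)⁻¹ * (2 * ‖η - ν‖) * (1-b)⁻¹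
      = ((1-a)⁻¹ * 2 * (1-b)⁻¹) * ‖η - ν‖ := by ring
    _ ≤ ((1-b)⁻¹ + (1-a)⁻¹ * (1-b)⁻¹ * (1 - 2*a - b)⁻¹) * ‖η - ν‖ :=
        mul_le_mul_of_nonneg_right hC (norm_nonneg _)
end

section
/- Let η, ν be skew-symmetric 3×3 matrices with ‖η‖₂ < 1 and ‖ν‖₂ < 1, and let η̇, ν̇ be skew-symmetric matrices. With D_X Cay(Y) = −Y(I+X)⁻¹ − (I−X)(I+X)⁻¹ Y (I+X)⁻¹ denoting the derivative of the Cayley transform, if additionally ‖ν‖₂ + ‖ν − η‖₂ < 1, then ‖D_η Cay(η̇) − D_ν Cay(ν̇)‖₂ ≤ C_a ‖η − ν‖₂ + C_b ‖η̇ − ν̇‖₂, where C_b = 1 + (1 − ‖ν‖₂)⁻¹ and C_a = (1 − ‖ν‖₂ − ‖ν−η‖₂)⁻¹ (‖η̇‖₂(1−‖η‖₂)⁻¹ + ‖ν̇‖₂(1−‖ν‖₂)⁻¹) + C_Φ ‖ν̇‖₂ with C_Φ the Lipschitz constant of Cay from the chart conditioning estimate. -/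
open scoped Matrix.Norms.L2Operator

set_option maxHeartbeats 1000000

/-- The derivative of the Cayley transform at `X` in direction `Y`:
`D_X Cay(Y) = −Y(I+X)⁻¹ − (I−X)(I+X)⁻¹ Y (I+X)⁻¹`. -/
noncomputable def DCay (X Y : Matrix (Fin 3) (Fin 3) ℝ) : Matrix (Fin 3) (Fin 3) ℝ :=
  -(Y * (1 + X)⁻¹) - (1 - X) * (1 + X)⁻¹ * Y * (1 + X)⁻¹


namespace CayAux

abbrev M := Matrix (Fin 3) (Fin 3) ℝ

variable {X : M}

lemma isUnit_one_add (h : ‖X‖ < 1) : IsUnit (1 + X) := by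
  have := isUnit_one_sub_of_norm_lt_one (x := -X) (by simpa using h)
  simpa [sub_neg_eq_add] using this

lemma isUnit_one_sub (h : ‖X‖ < 1) : IsUnit (1 - X) :=
  isUnit_one_sub_of_norm_lt_one h

lemma norm_inv_one_add_le (h : ‖X‖ < 1) : ‖(1 + X)⁻¹‖ ≤ (1 - ‖X‖)⁻¹ := by
  have h' : ‖-X‖ < 1 := by simpa using h
  have e : (1 : M) + X = 1 - (-X) := (sub_neg_eq_add 1 X).symm
  rw [Matrix.nonsing_inv_eq_ringInverse, e, ← geom_series_eq_inverse (-X) h']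
  calc ‖∑' n : ℕ, (-X) ^ n‖ ≤ ‖(1 : M)‖ - 1 + (1 - ‖-X‖)⁻¹ :=
        tsum_geometric_le_of_norm_lt_one _ h'
    _ = (1 - ‖X‖)⁻¹ := by rw [norm_one, norm_neg]; ring

lemma star_eq_neg (hs : X.transpose = -X) : star X = -X := by
  rw [Matrix.star_eq_conjTranspose]
  ext i j
  have := congrFun (congrFun hs i) j
  simp only [Matrix.transpose_apply, Matrix.neg_apply] at this
  simp [Matrix.conjTranspose_apply, this]

lemma cay_mem_unitary (hs : X.transpose = -X) (h : ‖X‖ < 1) :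
    (1 - X) * (1 + X)⁻¹ ∈ unitary M := by
  have hsub : IsUnit (1 - X) := isUnit_one_sub h
  have hadd : IsUnit (1 + X) := isUnit_one_add h
  have hsubd : IsUnit (1 - X).det := (Matrix.isUnit_iff_isUnit_det _).mp hsub
  have haddd : IsUnit (1 + X).det := (Matrix.isUnit_iff_isUnit_det _).mp hadd
  have hstarX : star X = -X := star_eq_neg hs
  have s1 : star ((1 : M) + X) = 1 - X := by
    rw [star_add, star_one, hstarX, ← sub_eq_add_neg]
  have s2 : star ((1 : M) - X) = 1 + X := by
    rw [star_sub, star_one, hstarX, sub_neg_eq_add]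
  have sinv : star (((1 : M) + X)⁻¹) = (star ((1 : M) + X))⁻¹ := by
    rw [Matrix.star_eq_conjTranspose, Matrix.star_eq_conjTranspose,
      Matrix.conjTranspose_nonsing_inv]
  have hstar : star ((1 - X) * (1 + X)⁻¹) = (1 - X)⁻¹ * (1 + X) := by
    rw [star_mul, sinv, s1, s2]
  have hcomm : (1 + X) * (1 - X) = (1 - X) * (1 + X) := by noncomm_ring
  constructor
  · rw [hstar]
    calc (1 - X)⁻¹ * (1 + X) * ((1 - X) * (1 + X)⁻¹)
        = (1 - X)⁻¹ * ((1 + X) * (1 - X)) * (1 + X)⁻¹ := by noncomm_ring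
      _ = (1 - X)⁻¹ * (1 - X) * ((1 + X) * (1 + X)⁻¹) := by rw [hcomm]; noncomm_ring
      _ = 1 := by rw [Matrix.nonsing_inv_mul _ hsubd, Matrix.mul_nonsing_inv _ haddd, one_mul]
  · rw [hstar]
    have hinvcomm : (1 + X)⁻¹ * (1 - X)⁻¹ = (1 - X)⁻¹ * (1 + X)⁻¹ := by
      rw [← Matrix.mul_inv_rev, ← Matrix.mul_inv_rev, hcomm]
    calc (1 - X) * (1 + X)⁻¹ * ((1 - X)⁻¹ * (1 + X))
        = (1 - X) * ((1 + X)⁻¹ * (1 - X)⁻¹) * (1 + X) := by noncomm_ring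
      _ = (1 - X) * (1 - X)⁻¹ * ((1 + X)⁻¹ * (1 + X)) := by rw [hinvcomm]; noncomm_ring
      _ = 1 := by rw [Matrix.mul_nonsing_inv _ hsubd, Matrix.nonsing_inv_mul _ haddd, one_mul]

lemma norm_cay (hs : X.transpose = -X) (h : ‖X‖ < 1) :
    ‖(1 - X) * (1 + X)⁻¹‖ = 1 :=
  CStarRing.norm_of_mem_unitary (cay_mem_unitary hs h)

lemma norm_inv_one_add_le_one (hs : X.transpose = -X) (h : ‖X‖ < 1) :
    ‖(1 + X)⁻¹‖ ≤ 1 := by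
  have haddd : IsUnit (1 + X).det := (Matrix.isUnit_iff_isUnit_det _).mp (isUnit_one_add h)
  have e : (1 : M) + (1 - X) * (1 + X)⁻¹ = (2 : ℝ) • ((1 + X)⁻¹) := by
    have h2 : (1 : M) - X = (2 : ℝ) • (1 : M) - (1 + X) := by
      rw [two_smul]; abel
    rw [h2, sub_mul, smul_mul_assoc, one_mul, Matrix.mul_nonsing_inv _ haddd]
    abel
  have hnorm : ‖(1 : M) + (1 - X) * (1 + X)⁻¹‖ ≤ 2 := by
    calc ‖(1 : M) + (1 - X) * (1 + X)⁻¹‖ ≤ ‖(1 : M)‖ + ‖(1 - X) * (1 + X)⁻¹‖ :=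
          norm_add_le _ _
      _ = 2 := by rw [norm_one, norm_cay hs h]; norm_num
  rw [e, norm_smul] at hnorm
  simp only [Real.norm_ofNat] at hnorm
  linarith

end CayAux


/-- Chart conditioning estimate for the derivative of the Cayley transform on `so(3)`:
`‖D_η Cay(η̇) − D_ν Cay(ν̇)‖₂ ≤ C_a ‖η − ν‖₂ + C_b ‖η̇ − ν̇‖₂`, where
`C_b = 1 + (1 − ‖ν‖)⁻¹` and
`C_a = (1 − ‖ν‖ − ‖ν − η‖)⁻¹ (‖η̇‖(1−‖η‖)⁻¹ + ‖ν̇‖(1−‖ν‖)⁻¹) + C_Φ ‖ν̇‖`,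
with `C_Φ` the Lipschitz constant of `Cay` from the chart conditioning estimate. -/

theorem stmt_5 (η ν ηdot νdot : Matrix (Fin 3) (Fin 3) ℝ)
    (hη : η.transpose = -η) (hν : ν.transpose = -ν)
    (hηd : ηdot.transpose = -ηdot) (hνd : νdot.transpose = -νdot)
    (hη1 : ‖η‖ < 1) (hν1 : ‖ν‖ < 1) (hνη : ‖ν‖ + ‖ν - η‖ < 1)
    (CΦ : ℝ) (hCΦ : ‖(1 - η) * (1 + η)⁻¹ - (1 - ν) * (1 + ν)⁻¹‖ ≤ CΦ * ‖η - ν‖) :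
    ‖DCay η ηdot - DCay ν νdot‖ ≤
      ((1 - ‖ν‖ - ‖ν - η‖)⁻¹ *
          (‖ηdot‖ * (1 - ‖η‖)⁻¹ + ‖νdot‖ * (1 - ‖ν‖)⁻¹) + CΦ * ‖νdot‖) * ‖η - ν‖
        + (1 + (1 - ‖ν‖)⁻¹) * ‖ηdot - νdot‖ := by
  have h1a : (0:ℝ) < 1 - ‖η‖ := by linarith
  have h1b : (0:ℝ) < 1 - ‖ν‖ := by linarith
  have h1bd : (0:ℝ) < 1 - ‖ν‖ - ‖ν - η‖ := by linarith
  have hηle : ‖η‖ ≤ ‖ν‖ + ‖ν - η‖ := by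
    calc ‖η‖ = ‖ν - (ν - η)‖ := by congr 1; abel
      _ ≤ ‖ν‖ + ‖ν - η‖ := norm_sub_le _ _
  have hainv : (1 - ‖η‖)⁻¹ ≤ (1 - ‖ν‖ - ‖ν - η‖)⁻¹ := by
    apply inv_anti₀ h1bd; linarith [norm_nonneg (ν - η)]
  have hbinv : (1 - ‖ν‖)⁻¹ ≤ (1 - ‖ν‖ - ‖ν - η‖)⁻¹ := by
    apply inv_anti₀ h1bd; linarith [norm_nonneg (ν - η)]
  have hia : (0:ℝ) ≤ (1 - ‖η‖)⁻¹ := by positivity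
  have hib : (0:ℝ) ≤ (1 - ‖ν‖)⁻¹ := by positivity
  set A := (1 + η)⁻¹ with hAdef
  set B := (1 + ν)⁻¹ with hBdef
  have hAdet : IsUnit (1 + η).det :=
    (Matrix.isUnit_iff_isUnit_det _).mp (CayAux.isUnit_one_add hη1)
  have hBdet : IsUnit (1 + ν).det :=
    (Matrix.isUnit_iff_isUnit_det _).mp (CayAux.isUnit_one_add hν1)
  have hA1 : ‖A‖ ≤ 1 := CayAux.norm_inv_one_add_le_one hη hη1
  have hB1 : ‖B‖ ≤ 1 := CayAux.norm_inv_one_add_le_one hν hν1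
  have hAle : ‖A‖ ≤ (1 - ‖η‖)⁻¹ := CayAux.norm_inv_one_add_le hη1
  have hBle : ‖B‖ ≤ (1 - ‖ν‖)⁻¹ := CayAux.norm_inv_one_add_le hν1
  have hAle' : ‖A‖ ≤ (1 - ‖ν‖ - ‖ν - η‖)⁻¹ := hAle.trans hainv
  have hBle' : ‖B‖ ≤ (1 - ‖ν‖ - ‖ν - η‖)⁻¹ := hBle.trans hbinv
  have hΦ1 : ‖(1 - η) * A‖ = 1 := CayAux.norm_cay hη hη1
  have hAB : A - B = A * (ν - η) * B := by
    have e1 : A * ((1 + ν) * B) = A := by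
      rw [hBdef, Matrix.mul_nonsing_inv _ hBdet, mul_one]
    have e2 : A * (1 + η) * B = B := by
      rw [hAdef, Matrix.nonsing_inv_mul _ hAdet, one_mul]
    calc A - B = A * ((1 + ν) * B) - A * (1 + η) * B := by rw [e1, e2]
      _ = A * (ν - η) * B := by noncomm_ring
  have hABnorm : ‖A - B‖ ≤ ‖A‖ * ‖η - ν‖ * ‖B‖ := by
    rw [hAB]
    calc ‖A * (ν - η) * B‖ ≤ ‖A * (ν - η)‖ * ‖B‖ := norm_mul_le _ _
      _ ≤ ‖A‖ * ‖ν - η‖ * ‖B‖ := by gcongr; exact norm_mul_le _ _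
      _ = ‖A‖ * ‖η - ν‖ * ‖B‖ := by rw [norm_sub_rev]
  have key : DCay η ηdot - DCay ν νdot =
      -((ηdot - νdot) * A) + -(νdot * (A - B)) + -((1 - η) * A * ηdot * (A - B))
        + -((1 - η) * A * (ηdot - νdot) * B)
        + -(((1 - η) * A - (1 - ν) * B) * νdot * B) := by
    simp only [DCay, ← hAdef, ← hBdef]
    noncomm_ring
  have n1 : ‖(ηdot - νdot) * A‖ ≤ ‖ηdot - νdot‖ := by
    calc ‖(ηdot - νdot) * A‖ ≤ ‖ηdot - νdot‖ * ‖A‖ := norm_mul_le _ _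
      _ ≤ ‖ηdot - νdot‖ * 1 := by gcongr
      _ = ‖ηdot - νdot‖ := mul_one _
  have n2 : ‖νdot * (A - B)‖ ≤
      ‖νdot‖ * ((1 - ‖ν‖ - ‖ν - η‖)⁻¹ * ‖η - ν‖ * (1 - ‖ν‖)⁻¹) := by
    calc ‖νdot * (A - B)‖ ≤ ‖νdot‖ * ‖A - B‖ := norm_mul_le _ _
      _ ≤ ‖νdot‖ * (‖A‖ * ‖η - ν‖ * ‖B‖) := by gcongr
      _ ≤ ‖νdot‖ * ((1 - ‖ν‖ - ‖ν - η‖)⁻¹ * ‖η - ν‖ * (1 - ‖ν‖)⁻¹) := by gcongr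
  have n3 : ‖(1 - η) * A * ηdot * (A - B)‖ ≤
      ‖ηdot‖ * ((1 - ‖η‖)⁻¹ * ‖η - ν‖ * (1 - ‖ν‖ - ‖ν - η‖)⁻¹) := by
    calc ‖(1 - η) * A * ηdot * (A - B)‖
        ≤ ‖(1 - η) * A * ηdot‖ * ‖A - B‖ := norm_mul_le _ _
      _ ≤ ‖(1 - η) * A‖ * ‖ηdot‖ * ‖A - B‖ := by gcongr; exact norm_mul_le _ _
      _ = ‖ηdot‖ * ‖A - B‖ := by rw [hΦ1, one_mul]
      _ ≤ ‖ηdot‖ * (‖A‖ * ‖η - ν‖ * ‖B‖) := by gcongr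
      _ ≤ ‖ηdot‖ * ((1 - ‖η‖)⁻¹ * ‖η - ν‖ * (1 - ‖ν‖ - ‖ν - η‖)⁻¹) := by gcongr
  have n4 : ‖(1 - η) * A * (ηdot - νdot) * B‖ ≤ (1 - ‖ν‖)⁻¹ * ‖ηdot - νdot‖ := by
    calc ‖(1 - η) * A * (ηdot - νdot) * B‖
        ≤ ‖(1 - η) * A * (ηdot - νdot)‖ * ‖B‖ := norm_mul_le _ _
      _ ≤ ‖(1 - η) * A‖ * ‖ηdot - νdot‖ * ‖B‖ := by gcongr; exact norm_mul_le _ _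
      _ = ‖ηdot - νdot‖ * ‖B‖ := by rw [hΦ1, one_mul]
      _ ≤ ‖ηdot - νdot‖ * (1 - ‖ν‖)⁻¹ := by gcongr
      _ = (1 - ‖ν‖)⁻¹ * ‖ηdot - νdot‖ := mul_comm _ _
  have hCΦ0 : (0:ℝ) ≤ CΦ * ‖η - ν‖ := le_trans (norm_nonneg _) hCΦ
  have n5 : ‖((1 - η) * A - (1 - ν) * B) * νdot * B‖ ≤ CΦ * ‖η - ν‖ * ‖νdot‖ := by
    calc ‖((1 - η) * A - (1 - ν) * B) * νdot * B‖
        ≤ ‖((1 - η) * A - (1 - ν) * B) * νdot‖ * ‖B‖ := norm_mul_le _ _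
      _ ≤ ‖(1 - η) * A - (1 - ν) * B‖ * ‖νdot‖ * ‖B‖ := by gcongr; exact norm_mul_le _ _
      _ ≤ (CΦ * ‖η - ν‖) * ‖νdot‖ * 1 := by gcongr
      _ = CΦ * ‖η - ν‖ * ‖νdot‖ := mul_one _
  have tri : ‖DCay η ηdot - DCay ν νdot‖ ≤
      ‖(ηdot - νdot) * A‖ + ‖νdot * (A - B)‖ + ‖(1 - η) * A * ηdot * (A - B)‖
        + ‖(1 - η) * A * (ηdot - νdot) * B‖
        + ‖((1 - η) * A - (1 - ν) * B) * νdot * B‖ := by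
    rw [key]
    refine le_trans ((norm_add_le _ _).trans (add_le_add_left ((norm_add_le _ _).trans
      (add_le_add_left ((norm_add_le _ _).trans
        (add_le_add_left (norm_add_le _ _) _)) _)) _)) ?_
    simp only [norm_neg, le_refl]
  have hsum :
      ‖ηdot - νdot‖ + ‖νdot‖ * ((1 - ‖ν‖ - ‖ν - η‖)⁻¹ * ‖η - ν‖ * (1 - ‖ν‖)⁻¹)
        + ‖ηdot‖ * ((1 - ‖η‖)⁻¹ * ‖η - ν‖ * (1 - ‖ν‖ - ‖ν - η‖)⁻¹)
        + (1 - ‖ν‖)⁻¹ * ‖ηdot - νdot‖ + CΦ * ‖η - ν‖ * ‖νdot‖ =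
      ((1 - ‖ν‖ - ‖ν - η‖)⁻¹ *
          (‖ηdot‖ * (1 - ‖η‖)⁻¹ + ‖νdot‖ * (1 - ‖ν‖)⁻¹) + CΦ * ‖νdot‖) * ‖η - ν‖
        + (1 + (1 - ‖ν‖)⁻¹) * ‖ηdot - νdot‖ := by ring
  linarith [tri, n1, n2, n3, n4, n5]
end

section
/- Let S : X → ℝ be a functional on a normed space, twice Fréchet differentiable, with stationary point x̄ (the exact solution) satisfying coercivity |D²S(ξ)[δ][δ]| ≥ C_coer ‖δ‖² for all ξ, δ. If x̃ satisfies |S(x̄) − S(x̃)| ≤ C Kⁿ for constants C > 0, 0 < K < 1, then ‖x̄ − x̃‖ ≤ √(2C/C_coer) · (√K)ⁿ. -/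
open Set in
private lemma taylor_key (X : Type*) [NormedAddCommGroup X] [NormedSpace ℝ X]
    (S : X → ℝ) (hS : ContDiff ℝ 2 S) (xbar : X) (δ : X)
    (hstat : fderiv ℝ S xbar = 0) :
    ∃ c ∈ Ioo (0:ℝ) 1, S (xbar + δ) - S xbar
      = fderiv ℝ (fderiv ℝ S) (xbar + c • δ) δ δ / 2 := by
  set L : ℝ → X := fun t => xbar + t • δ with hLdef
  have hLc : ContDiff ℝ 2 L := contDiff_const.add (contDiff_id.smul contDiff_const)
  set g : ℝ → ℝ := fun t => S (L t) with hgdef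
  have hg : ContDiff ℝ 2 g := hS.comp hLc
  have hLd : ∀ t : ℝ, HasDerivAt L δ t := by
    intro t
    simpa [hLdef] using ((hasDerivAt_id t).smul_const δ).const_add xbar
  have hd1 : ∀ t : ℝ, HasDerivAt g (fderiv ℝ S (L t) δ) t := by
    intro t
    exact ((hS.differentiable two_ne_zero (L t)).hasFDerivAt).comp_hasDerivAt t (hLd t)
  have hF1 : ContDiff ℝ 1 (fderiv ℝ S) := hS.fderiv_right (by norm_num)
  have hd2 : ∀ t : ℝ, HasDerivAt (fun t => fderiv ℝ S (L t) δ)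
      (fderiv ℝ (fderiv ℝ S) (L t) δ δ) t := by
    intro t
    have h1 : HasDerivAt (fun t => fderiv ℝ S (L t))
        (fderiv ℝ (fderiv ℝ S) (L t) δ) t :=
      ((hF1.differentiable one_ne_zero (L t)).hasFDerivAt).comp_hasDerivAt t (hLd t)
    exact ((ContinuousLinearMap.apply ℝ ℝ δ).hasFDerivAt.comp_hasDerivAt t h1)
  have hdg : deriv g = fun t => fderiv ℝ S (L t) δ := funext fun t => (hd1 t).deriv
  obtain ⟨c, hc, heq⟩ := taylor_mean_remainder_lagrange (f := g) (n := 1) (x₀ := 0) (x := 1)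
    (zero_ne_one) (hg.contDiffOn.of_le one_le_two)
    (by
      rw [uIcc_of_le zero_le_one, uIoo_of_le zero_le_one]
      apply DifferentiableOn.congr (f := deriv g)
      · intro x _; exact ((hd2 x).differentiableAt.congr_of_eventuallyEq
          (by filter_upwards with t; rw [hdg])).differentiableWithinAt
      · intro x hx
        rw [iteratedDerivWithin_one]
        exact ((hd1 x).differentiableAt.derivWithin
          ((uniqueDiffOn_Icc zero_lt_one) x (Ioo_subset_Icc_self hx))))
  rw [uIoo_of_le zero_le_one] at hc
  rw [uIcc_of_le zero_le_one] at heq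
  refine ⟨c, hc, ?_⟩
  have h2 : iteratedDerivWithin 2 g (Icc 0 1) c = fderiv ℝ (fderiv ℝ S) (L c) δ δ := by
    have e1 : iteratedDerivWithin 2 g (Icc 0 1) c = iteratedDeriv 2 g c := by
      rw [iteratedDerivWithin_eq_iteratedFDerivWithin, iteratedDeriv_eq_iteratedFDeriv]
      congr 1
      have := iteratedFDerivWithin_inter_open (f := g) (𝕜 := ℝ) (s := Icc (0:ℝ) 1)
        (n := 2) (u := Ioo (0:ℝ) 1) isOpen_Ioo hc
      rw [← this, Set.inter_eq_self_of_subset_right Ioo_subset_Icc_self]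
      exact iteratedFDerivWithin_of_isOpen 2 isOpen_Ioo hc
    rw [e1, iteratedDeriv_succ, iteratedDeriv_one, hdg]
    exact (hd2 c).deriv
  have htay : taylorWithinEval g 1 (Icc 0 1) 0 1 = g 0 := by
    rw [taylorWithinEval_succ, taylor_within_zero_eval]
    have : iteratedDerivWithin 1 g (Icc (0:ℝ) 1) 0 = 0 := by
      rw [iteratedDerivWithin_one,
        (hd1 0).differentiableAt.derivWithin ((uniqueDiffOn_Icc zero_lt_one) 0 (by norm_num))]
      rw [(hd1 0).deriv]
      simp [hLdef, hstat]
    simp [this]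
  rw [htay, h2] at heq
  have : g 1 = S (xbar + δ) := by simp [hgdef, hLdef]
  have h0 : g 0 = S xbar := by simp [hgdef, hLdef]
  rw [this, h0] at heq
  rw [heq]
  norm_num
  rfl

/-- Galerkin curve convergence: if `x̄` is a stationary point of a twice Fréchet
differentiable functional `S` whose second derivative is uniformly coercive,
`|D²S(ξ)[δ][δ]| ≥ C_coer ‖δ‖²`, and `x̃` satisfies `|S(x̄) − S(x̃)| ≤ C Kⁿ`,
then `‖x̄ − x̃‖ ≤ √(2C/C_coer) (√K)ⁿ`. -/
theorem stmt_15 (X : Type*) [NormedAddCommGroup X] [NormedSpace ℝ X]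
    (S : X → ℝ) (hS : ContDiff ℝ 2 S) (xbar xtil : X)
    (Ccoer C K : ℝ) (hCcoer : 0 < Ccoer) (hC : 0 < C) (hK0 : 0 < K) (hK1 : K < 1)
    (n : ℕ)
    (hstat : fderiv ℝ S xbar = 0)
    (hcoer : ∀ ξ : X, ∀ δ : X, |fderiv ℝ (fderiv ℝ S) ξ δ δ| ≥ Ccoer * ‖δ‖ ^ 2)
    (hclose : |S xbar - S xtil| ≤ C * K ^ n) :
    ‖xbar - xtil‖ ≤ Real.sqrt (2 * C / Ccoer) * Real.sqrt K ^ n := by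
  set δ : X := xtil - xbar with hδ
  obtain ⟨c, _, heq⟩ := taylor_key X S hS xbar δ hstat
  have hadd : xbar + δ = xtil := by simp [hδ]
  rw [hadd] at heq
  have hb : Ccoer * ‖δ‖ ^ 2 ≤ 2 * (C * K ^ n) := by
    calc Ccoer * ‖δ‖ ^ 2 ≤ |fderiv ℝ (fderiv ℝ S) (xbar + c • δ) δ δ| := hcoer _ _
      _ = 2 * |S xbar - S xtil| := by
          rw [abs_sub_comm, heq]; rw [abs_div]; norm_num; ring
      _ ≤ 2 * (C * K ^ n) := by linarith
  have hsq : ‖δ‖ ^ 2 ≤ 2 * C / Ccoer * K ^ n := by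
    rw [div_mul_eq_mul_div, le_div_iff₀ hCcoer]
    nlinarith
  have hnorm : ‖xbar - xtil‖ = ‖δ‖ := by rw [hδ, norm_sub_rev]
  rw [hnorm]
  have h1 : ‖δ‖ = Real.sqrt (‖δ‖ ^ 2) := by
    rw [Real.sqrt_sq (norm_nonneg _)]
  rw [h1]
  calc Real.sqrt (‖δ‖ ^ 2) ≤ Real.sqrt (2 * C / Ccoer * K ^ n) := Real.sqrt_le_sqrt hsq
    _ = Real.sqrt (2 * C / Ccoer) * Real.sqrt K ^ n := by
        have hpow : ∀ m : ℕ, Real.sqrt (K ^ m) = Real.sqrt K ^ m := by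
          intro m
          induction m with
          | zero => simp
          | succ m ih => rw [pow_succ, pow_succ, Real.sqrt_mul (by positivity), ih]
        rw [Real.sqrt_mul (by positivity), hpow]
end
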